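/- Let (μ_n) be a sequence of finite nonnegative Borel measures on ℝ² such that ∬ (x² + y²) ∨ 1 dμ_n(x,y) < ∞ for all n. The sequence of weighted measures ν_n, where ν_n has density (x,y) ↦ (x² + y²) ∨ 1 with respect to μ_n, is tight if and only if both of the following sequences of measures on ℝ are tight: the measures with density x ↦ x² ∨ 1 with respect to the first marginals μ_n ∘ pr₁⁻¹, and the measures with density y ↦ y² ∨ 1 with respect to the second marginals μ_n ∘ pr₂⁻¹. -/

import Mathlib

open MeasureTheory

/-- A sequence of measures is tight if for every `ε > 0` there is a compact set
whose complement has measure less than `ε` for all `n`. -/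
def TightSeq {α : Type*} [TopologicalSpace α] [MeasurableSpace α]
    (ν : ℕ → Measure α) : Prop :=
  ∀ ε : ℝ, 0 < ε → ∃ K : Set α, IsCompact K ∧ ∀ n, ν n Kᶜ < ENNReal.ofReal ε

private lemma g_meas : Measurable fun x : ℝ => ENNReal.ofReal (x ^ 2 ⊔ 1) :=
  ((measurable_id.pow_const 2).sup measurable_const).ennreal_ofReal

private lemma f_meas :
    Measurable fun p : ℝ × ℝ => ENNReal.ofReal ((p.1 ^ 2 + p.2 ^ 2) ⊔ 1) :=
  (((measurable_fst.pow_const 2).add (measurable_snd.pow_const 2)).sup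
    measurable_const).ennreal_ofReal

theorem stmt_6 (μ : ℕ → Measure (ℝ × ℝ)) [∀ n, IsFiniteMeasure (μ n)]
    (hfin : ∀ n, (∫⁻ p, ENNReal.ofReal ((p.1 ^ 2 + p.2 ^ 2) ⊔ 1) ∂(μ n)) < ⊤) :
    TightSeq (fun n =>
        (μ n).withDensity (fun p => ENNReal.ofReal ((p.1 ^ 2 + p.2 ^ 2) ⊔ 1))) ↔
      (TightSeq (fun n =>
          ((μ n).map Prod.fst).withDensity (fun x => ENNReal.ofReal (x ^ 2 ⊔ 1))) ∧
        TightSeq (fun n =>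
          ((μ n).map Prod.snd).withDensity (fun y => ENNReal.ofReal (y ^ 2 ⊔ 1)))) := by
  constructor
  · intro h
    constructor
    · -- first marginal
      intro ε hε
      obtain ⟨K, hK, hKμ⟩ := h ε hε
      obtain ⟨r, hr⟩ := hK.isBounded.subset_closedBall (0, 0)
      refine ⟨Metric.closedBall 0 r, isCompact_closedBall _ _, fun n => ?_⟩
      have hKc : MeasurableSet Kᶜ := hK.isClosed.measurableSet.compl
      have hBc : MeasurableSet (Metric.closedBall (0 : ℝ) r)ᶜ :=
        measurableSet_closedBall.compl
      refine lt_of_le_of_lt ?_ (hKμ n)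
      rw [withDensity_apply _ hBc, setLIntegral_map hBc g_meas measurable_fst,
        withDensity_apply _ hKc]
      refine le_trans (setLIntegral_mono f_meas fun p hp => ?_)
        (lintegral_mono_set fun p hp => ?_)
      · exact ENNReal.ofReal_le_ofReal
          (sup_le_sup_right (by nlinarith [sq_nonneg p.2]) 1)
      · intro hpK
        have := hr hpK
        simp only [Metric.mem_closedBall, Prod.dist_eq, max_le_iff] at this
        exact hp (Metric.mem_closedBall.2 this.1)
    · -- second marginal
      intro ε hε
      obtain ⟨K, hK, hKμ⟩ := h ε hε
      obtain ⟨r, hr⟩ := hK.isBounded.subset_closedBall (0, 0)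
      refine ⟨Metric.closedBall 0 r, isCompact_closedBall _ _, fun n => ?_⟩
      have hKc : MeasurableSet Kᶜ := hK.isClosed.measurableSet.compl
      have hBc : MeasurableSet (Metric.closedBall (0 : ℝ) r)ᶜ :=
        measurableSet_closedBall.compl
      refine lt_of_le_of_lt ?_ (hKμ n)
      rw [withDensity_apply _ hBc, setLIntegral_map hBc g_meas measurable_snd,
        withDensity_apply _ hKc]
      refine le_trans (setLIntegral_mono f_meas fun p hp => ?_)
        (lintegral_mono_set fun p hp => ?_)
      · exact ENNReal.ofReal_le_ofReal
          (sup_le_sup_right (by nlinarith [sq_nonneg p.1]) 1)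
      · intro hpK
        have := hr hpK
        simp only [Metric.mem_closedBall, Prod.dist_eq, max_le_iff] at this
        exact hp (Metric.mem_closedBall.2 this.2)
  · rintro ⟨h₁, h₂⟩ ε hε
    obtain ⟨K₁, hK₁, hK₁μ⟩ := h₁ (ε / 4) (by linarith)
    obtain ⟨K₂, hK₂, hK₂μ⟩ := h₂ (ε / 4) (by linarith)
    obtain ⟨r₁, hr₁⟩ := hK₁.isBounded.subset_closedBall 0
    obtain ⟨r₂, hr₂⟩ := hK₂.isBounded.subset_closedBall 0
    set r := max r₁ r₂ with hrdef
    set B : Set ℝ := Metric.closedBall 0 r with hBdef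
    have hBmeas : MeasurableSet B := measurableSet_closedBall
    have hK₁B : K₁ ⊆ B := hr₁.trans (Metric.closedBall_subset_closedBall (le_max_left _ _))
    have hK₂B : K₂ ⊆ B := hr₂.trans (Metric.closedBall_subset_closedBall (le_max_right _ _))
    refine ⟨B ×ˢ B, (isCompact_closedBall _ _).prod (isCompact_closedBall _ _), fun n => ?_⟩
    have hKmeas : MeasurableSet ((B ×ˢ B)ᶜ) := (hBmeas.prod hBmeas).compl
    -- rewrite the three measures as lintegrals of indicators
    have key : ((μ n).withDensity fun p => ENNReal.ofReal ((p.1 ^ 2 + p.2 ^ 2) ⊔ 1))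
          ((B ×ˢ B)ᶜ)
        ≤ 2 * (((μ n).map Prod.fst).withDensity
            (fun x => ENNReal.ofReal (x ^ 2 ⊔ 1))) Bᶜ
          + 2 * (((μ n).map Prod.snd).withDensity
            (fun y => ENNReal.ofReal (y ^ 2 ⊔ 1))) Bᶜ := by
      have hg1 : Measurable fun x : ℝ × ℝ => ENNReal.ofReal (x.1 ^ 2 ⊔ 1) :=
        g_meas.comp measurable_fst
      have hg2 : Measurable fun x : ℝ × ℝ => ENNReal.ofReal (x.2 ^ 2 ⊔ 1) :=
        g_meas.comp measurable_snd
      rw [withDensity_apply _ hKmeas, withDensity_apply _ hBmeas.compl,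
        withDensity_apply _ hBmeas.compl,
        setLIntegral_map hBmeas.compl g_meas measurable_fst,
        setLIntegral_map hBmeas.compl g_meas measurable_snd,
        ← lintegral_indicator hKmeas, ← lintegral_indicator (hBmeas.compl.preimage measurable_fst),
        ← lintegral_indicator (hBmeas.compl.preimage measurable_snd),
        ← lintegral_const_mul 2 (hg1.indicator (hBmeas.compl.preimage measurable_fst)),
        ← lintegral_const_mul 2 (hg2.indicator (hBmeas.compl.preimage measurable_snd)),
        ← lintegral_add_left ((hg1.indicator (hBmeas.compl.preimage measurable_fst)).const_mul 2)]
      refine lintegral_mono fun p => ?_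
      by_cases hp : p ∈ B ×ˢ B
      · rw [Set.indicator_of_notMem (by simpa using hp)]
        exact zero_le
      · rw [Set.indicator_of_mem (by simpa using hp)]
        have hx : ∀ z : ℝ, ENNReal.ofReal ((p.1 ^ 2 + p.2 ^ 2) ⊔ 1)
            ≤ 2 * ENNReal.ofReal (z ^ 2 ⊔ 1) → True := fun _ _ => trivial
        rcases le_total (p.2 ^ 2) (p.1 ^ 2) with hc | hc
        · -- first coordinate dominates; then p.1 ∉ B
          have hp1 : p.1 ∉ B := by
            intro hmem
            apply hp
            refine ⟨hmem, ?_⟩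
            rw [hBdef, mem_closedBall_zero_iff, Real.norm_eq_abs] at hmem ⊢
            nlinarith [abs_nonneg p.1, abs_nonneg p.2, sq_abs p.1, sq_abs p.2]
          have hmem : p ∈ Prod.fst ⁻¹' Bᶜ := hp1
          refine le_trans ?_ (le_add_right le_rfl)
          rw [Set.indicator_of_mem hmem]
          have : ((p.1 ^ 2 + p.2 ^ 2) ⊔ 1) ≤ 2 * (p.1 ^ 2 ⊔ 1) := by
            rcases le_total (p.1 ^ 2) 1 with h1 | h1 <;>
              simp only [sup_le_iff] <;> constructor <;>
              nlinarith [le_max_left (p.1 ^ 2) 1, le_max_right (p.1 ^ 2) 1]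
          calc ENNReal.ofReal ((p.1 ^ 2 + p.2 ^ 2) ⊔ 1)
              ≤ ENNReal.ofReal (2 * (p.1 ^ 2 ⊔ 1)) := ENNReal.ofReal_le_ofReal this
            _ = 2 * ENNReal.ofReal (p.1 ^ 2 ⊔ 1) := by
                rw [ENNReal.ofReal_mul (by norm_num)]
                norm_num
        · -- second coordinate dominates; then p.2 ∉ B
          have hp2 : p.2 ∉ B := by
            intro hmem
            apply hp
            refine ⟨?_, hmem⟩
            rw [hBdef, mem_closedBall_zero_iff, Real.norm_eq_abs] at hmem ⊢
            nlinarith [abs_nonneg p.1, abs_nonneg p.2, sq_abs p.1, sq_abs p.2]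
          have hmem : p ∈ Prod.snd ⁻¹' Bᶜ := hp2
          refine le_trans ?_ (le_add_left le_rfl)
          rw [Set.indicator_of_mem hmem]
          have : ((p.1 ^ 2 + p.2 ^ 2) ⊔ 1) ≤ 2 * (p.2 ^ 2 ⊔ 1) := by
            rcases le_total (p.2 ^ 2) 1 with h1 | h1 <;>
              simp only [sup_le_iff] <;> constructor <;>
              nlinarith [le_max_left (p.2 ^ 2) 1, le_max_right (p.2 ^ 2) 1]
          calc ENNReal.ofReal ((p.1 ^ 2 + p.2 ^ 2) ⊔ 1)
              ≤ ENNReal.ofReal (2 * (p.2 ^ 2 ⊔ 1)) := ENNReal.ofReal_le_ofReal this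
            _ = 2 * ENNReal.ofReal (p.2 ^ 2 ⊔ 1) := by
                rw [ENNReal.ofReal_mul (by norm_num)]
                norm_num
    refine lt_of_le_of_lt key ?_
    have hm₁ : (((μ n).map Prod.fst).withDensity
        (fun x => ENNReal.ofReal (x ^ 2 ⊔ 1))) Bᶜ < ENNReal.ofReal (ε / 4) :=
      lt_of_le_of_lt (measure_mono (Set.compl_subset_compl.2 hK₁B)) (hK₁μ n)
    have hm₂ : (((μ n).map Prod.snd).withDensity
        (fun y => ENNReal.ofReal (y ^ 2 ⊔ 1))) Bᶜ < ENNReal.ofReal (ε / 4) :=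
      lt_of_le_of_lt (measure_mono (Set.compl_subset_compl.2 hK₂B)) (hK₂μ n)
    calc 2 * _ + 2 * _
        < 2 * ENNReal.ofReal (ε / 4) + 2 * ENNReal.ofReal (ε / 4) :=
          ENNReal.add_lt_add
            (ENNReal.mul_lt_mul_right (by norm_num) (by norm_num) hm₁)
            (ENNReal.mul_lt_mul_right (by norm_num) (by norm_num) hm₂)
      _ = ENNReal.ofReal ε := by
          rw [← two_mul, ← mul_assoc]
          norm_num
          rw [← ENNReal.ofReal_ofNat 4, ← ENNReal.ofReal_mul (by norm_num)]
          congr 1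
          linarith
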